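/- Let N = C + iD be a bounded normal operator on a complex Hilbert space with D ≤ 0. Then T = ((|N|+C)/2)^{1/2} - i((|N|-C)/2)^{1/2} is a normal operator satisfying T² = N. -/

import Mathlib

set_option synthInstance.maxHeartbeats 1000000
set_option maxHeartbeats 1000000

open scoped ComplexOrder in
lemma cfc_ofReal_nonneg {A : Type*} [CStarAlgebra A] [PartialOrder A] [StarOrderedRing A]
    (a : A) (f : ℂ → ℝ) (hf : Continuous f) (h0 : ∀ z ∈ spectrum ℂ a, 0 ≤ f z) :
    0 ≤ cfc (fun z => (f z : ℂ)) a := by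
  have key : cfc (fun z => (f z : ℂ)) a
      = star (cfc (fun z => ((Real.sqrt (f z) : ℝ) : ℂ)) a) *
        cfc (fun z => ((Real.sqrt (f z) : ℝ) : ℂ)) a := by
    rw [← cfc_star, ← cfc_mul _ _ _ (by fun_prop) (by fun_prop)]
    exact cfc_congr fun z hz => by
      simp only [Complex.star_def, Complex.conj_ofReal, ← Complex.ofReal_mul,
        Real.mul_self_sqrt (h0 z hz)]
  rw [key]
  exact star_mul_self_nonneg _

lemma pointwise_sq (z : ℂ) (hy : z.im ≤ 0) :
    ((Real.sqrt ((‖z‖ + z.re)/2) : ℂ) - Complex.I * (Real.sqrt ((‖z‖ - z.re)/2) : ℂ)) *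
    ((Real.sqrt ((‖z‖ + z.re)/2) : ℂ) - Complex.I * (Real.sqrt ((‖z‖ - z.re)/2) : ℂ)) = z := by
  set r := ‖z‖ with hr
  set x := z.re; set y := z.im
  have hx : |x| ≤ r := Complex.abs_re_le_norm z
  have h1 : (0:ℝ) ≤ (r + x)/2 := by have := neg_abs_le x; linarith
  have h2 : (0:ℝ) ≤ (r - x)/2 := by have := le_abs_self x; linarith
  set a := Real.sqrt ((r + x)/2) with hadef
  set b := Real.sqrt ((r - x)/2) with hbdef
  have ha : a * a = (r + x)/2 := Real.mul_self_sqrt h1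
  have hb : b * b = (r - x)/2 := Real.mul_self_sqrt h2
  have hr2 : r ^ 2 = x ^ 2 + y ^ 2 := by
    rw [hr, Complex.sq_norm, Complex.normSq_apply]; ring
  have hab : a * b = -y/2 := by
    rw [hadef, hbdef, ← Real.sqrt_mul h1]
    have : (r + x)/2 * ((r - x)/2) = (-y/2)^2 := by nlinarith [hr2]
    rw [this, Real.sqrt_sq (by linarith : (0:ℝ) ≤ -y/2)]
  have ha' : (a:ℂ) * (a:ℂ) = (((r + x)/2 : ℝ) : ℂ) := by exact_mod_cast congrArg Complex.ofReal ha
  have hb' : (b:ℂ) * (b:ℂ) = (((r - x)/2 : ℝ) : ℂ) := by exact_mod_cast congrArg Complex.ofReal hb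
  have hab' : (a:ℂ) * (b:ℂ) = ((-y/2 : ℝ) : ℂ) := by exact_mod_cast congrArg Complex.ofReal hab
  have hz' : (x:ℂ) + (y:ℂ) * Complex.I = z := Complex.re_add_im z
  have hIsq : Complex.I ^ 2 = -1 := Complex.I_sq
  push_cast at ha' hb' hab' ⊢
  linear_combination ha' + Complex.I^2 * hb' - 2*Complex.I*hab' + hz' + (((r:ℂ) - x)/2) * hIsq


open scoped ComplexOrder in
lemma im_spectrum_nonpos {A : Type*} [CStarAlgebra A] [PartialOrder A] [StarOrderedRing A]
    (N D : A) (hnormal : IsStarNormal N) (hDcfc : cfc (fun z : ℂ => (z.im : ℂ)) N = D)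
    (hD0 : D ≤ 0) : ∀ z ∈ spectrum ℂ N, z.im ≤ 0 := by
  intro z hz
  have hDneg : cfc (fun z : ℂ => ((-z.im : ℝ) : ℂ)) N = -D := by
    rw [← hDcfc, ← cfc_neg (fun z : ℂ => (z.im : ℂ)) N]
    exact cfc_congr fun z _ => by push_cast; ring
  have h0 : (0:ℂ) ≤ ((-z.im : ℝ) : ℂ) := by
    apply spectrum_nonneg_of_nonneg (neg_nonneg.mpr hD0)
    rw [← hDneg, cfc_map_spectrum (fun z : ℂ => ((-z.im : ℝ) : ℂ)) N]
    exact ⟨z, hz, rfl⟩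
  have := Complex.zero_le_real.mp h0
  linarith

open ContinuousLinearMap in
theorem normal_sqrt_of_im_nonpos
    {H : Type*} [NormedAddCommGroup H] [InnerProductSpace ℂ H] [CompleteSpace H]
    (N C D : H →L[ℂ] H) (hC : IsSelfAdjoint C) (hD : IsSelfAdjoint D)
    (hN : N = C + Complex.I • D) (hnormal : IsStarNormal N) (hD0 : D ≤ 0) :
    IsStarNormal (CFC.sqrt ((2 : ℂ)⁻¹ • (CFC.sqrt (star N * N) + C)) -
        Complex.I • CFC.sqrt ((2 : ℂ)⁻¹ • (CFC.sqrt (star N * N) - C))) ∧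
    (CFC.sqrt ((2 : ℂ)⁻¹ • (CFC.sqrt (star N * N) + C)) -
        Complex.I • CFC.sqrt ((2 : ℂ)⁻¹ • (CFC.sqrt (star N * N) - C))) ^ 2 = N := by
  have hstar : star N = C - Complex.I • D := by
    rw [hN, star_add, star_smul, hC.star_eq, hD.star_eq]
    simp [Complex.star_def, Complex.conj_I, sub_eq_add_neg, neg_smul]
  -- C as cfc
  have hCcfc : cfc (fun z : ℂ => (z.re : ℂ)) N = C := by
    have hcongr : ∀ z ∈ spectrum ℂ N, (z.re : ℂ) = (2:ℂ)⁻¹ * (z + star z) := fun z _ => by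
      rw [Complex.star_def, Complex.add_conj]; push_cast; ring
    rw [cfc_congr hcongr, cfc_const_mul _ _ _ (by fun_prop),
      cfc_add _ _ _ (by fun_prop) (by fun_prop), cfc_id' ℂ (a := N) hnormal, cfc_star_id (R := ℂ) (a := N) hnormal, hstar, hN]
    module
  -- D as cfc
  have hDcfc : cfc (fun z : ℂ => (z.im : ℂ)) N = D := by
    have hcongr : ∀ z ∈ spectrum ℂ N, (z.im : ℂ) = (-(2:ℂ)⁻¹ * Complex.I) * (z - star z) :=
      fun z _ => by
        rw [Complex.star_def, Complex.sub_conj]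
        push_cast
        linear_combination ((z.im : ℂ)) * Complex.I_sq
    rw [cfc_congr hcongr, cfc_const_mul _ _ _ (by fun_prop),
      cfc_sub _ _ _ (by fun_prop) (by fun_prop), cfc_id' ℂ (a := N) hnormal, cfc_star_id (R := ℂ) (a := N) hnormal, hstar, hN]
    have h2 : (C + Complex.I • D) - (C - Complex.I • D) = (2 * Complex.I) • D := by module
    rw [h2, smul_smul]
    have : (-(2:ℂ)⁻¹ * Complex.I) * (2 * Complex.I) = 1 := by
      have : Complex.I * Complex.I = -1 := Complex.I_mul_I
      linear_combination (-1 : ℂ) * this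
    rw [this, one_smul]
  have cabs : Continuous fun z : ℂ => (‖z‖ : ℂ) :=
    Complex.continuous_ofReal.comp continuous_norm
  -- |N| as cfc
  have habs : CFC.sqrt (star N * N) = cfc (fun z : ℂ => (‖z‖ : ℂ)) N := by
    refine CFC.sqrt_unique ?_ ?_
    · rw [← cfc_mul _ _ _ cabs.continuousOn cabs.continuousOn]
      have : star N * N = cfc (fun z : ℂ => star z * z) N := by
        rw [cfc_mul _ _ _ (by fun_prop) (by fun_prop), cfc_star_id (R := ℂ) (a := N) hnormal, cfc_id' ℂ (a := N) hnormal]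
      rw [this]
      refine (cfc_congr fun z _ => ?_).symm
      rw [Complex.star_def, mul_comm, Complex.mul_conj, Complex.normSq_eq_norm_sq]
      push_cast
      ring
    · exact cfc_ofReal_nonneg N (fun z => ‖z‖) continuous_norm
        (fun z _ => norm_nonneg z)
  have cre : Continuous fun z : ℂ => (z.re : ℂ) :=
    Complex.continuous_ofReal.comp Complex.continuous_re
  have cont1 : Continuous fun z : ℂ => ((Real.sqrt ((‖z‖ + z.re)/2) : ℝ) : ℂ) :=
    Complex.continuous_ofReal.comp (Real.continuous_sqrt.comp
      ((continuous_norm.add Complex.continuous_re).div_const 2))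
  have cont2 : Continuous fun z : ℂ => ((Real.sqrt ((‖z‖ - z.re)/2) : ℝ) : ℂ) :=
    Complex.continuous_ofReal.comp (Real.continuous_sqrt.comp
      ((continuous_norm.sub Complex.continuous_re).div_const 2))
  have hP : CFC.sqrt ((2 : ℂ)⁻¹ • (CFC.sqrt (star N * N) + C))
      = cfc (fun z : ℂ => ((Real.sqrt ((‖z‖ + z.re)/2) : ℝ) : ℂ)) N := by
    refine CFC.sqrt_unique ?_ ?_
    · rw [← cfc_mul _ _ _ cont1.continuousOn cont1.continuousOn]
      have step : cfc (fun z : ℂ => ((Real.sqrt ((‖z‖ + z.re)/2) : ℝ) : ℂ) *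
            ((Real.sqrt ((‖z‖ + z.re)/2) : ℝ) : ℂ)) N
          = cfc (fun z : ℂ => (2:ℂ)⁻¹ * ((‖z‖ : ℂ) + (z.re : ℂ))) N := by
        refine cfc_congr fun z _ => ?_
        have h1 : (0:ℝ) ≤ (‖z‖ + z.re)/2 := by
          have h := neg_abs_le z.re; have h2 := Complex.abs_re_le_norm z; linarith
        rw [← Complex.ofReal_mul, Real.mul_self_sqrt h1]
        push_cast; ring
      rw [step, cfc_const_mul _ (fun z : ℂ => (‖z‖ : ℂ) + (z.re : ℂ)) _ (cabs.add cre).continuousOn,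
        cfc_add _ _ _ cabs.continuousOn cre.continuousOn, hCcfc, ← habs]
    · exact cfc_ofReal_nonneg N (fun z => Real.sqrt ((‖z‖ + z.re)/2))
        (Real.continuous_sqrt.comp
          ((continuous_norm.add Complex.continuous_re).div_const 2))
        (fun z _ => Real.sqrt_nonneg _)
  have hQ : CFC.sqrt ((2 : ℂ)⁻¹ • (CFC.sqrt (star N * N) - C))
      = cfc (fun z : ℂ => ((Real.sqrt ((‖z‖ - z.re)/2) : ℝ) : ℂ)) N := by
    refine CFC.sqrt_unique ?_ ?_
    · rw [← cfc_mul _ _ _ cont2.continuousOn cont2.continuousOn]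
      have step : cfc (fun z : ℂ => ((Real.sqrt ((‖z‖ - z.re)/2) : ℝ) : ℂ) *
            ((Real.sqrt ((‖z‖ - z.re)/2) : ℝ) : ℂ)) N
          = cfc (fun z : ℂ => (2:ℂ)⁻¹ * ((‖z‖ : ℂ) - (z.re : ℂ))) N := by
        refine cfc_congr fun z _ => ?_
        have h1 : (0:ℝ) ≤ (‖z‖ - z.re)/2 := by
          have h := le_abs_self z.re; have h2 := Complex.abs_re_le_norm z; linarith
        rw [← Complex.ofReal_mul, Real.mul_self_sqrt h1]
        push_cast; ring
      rw [step, cfc_const_mul _ (fun z : ℂ => (‖z‖ : ℂ) - (z.re : ℂ)) _ (cabs.sub cre).continuousOn,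
        cfc_sub _ _ _ cabs.continuousOn cre.continuousOn, hCcfc, ← habs]
    · exact cfc_ofReal_nonneg N (fun z => Real.sqrt ((‖z‖ - z.re)/2))
        (Real.continuous_sqrt.comp
          ((continuous_norm.sub Complex.continuous_re).div_const 2))
        (fun z _ => Real.sqrt_nonneg _)
  have contg : Continuous fun z : ℂ => ((Real.sqrt ((‖z‖ + z.re)/2) : ℝ) : ℂ) -
      Complex.I * ((Real.sqrt ((‖z‖ - z.re)/2) : ℝ) : ℂ) :=
    cont1.sub (continuous_const.mul cont2)
  have key : CFC.sqrt ((2 : ℂ)⁻¹ • (CFC.sqrt (star N * N) + C)) -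
        Complex.I • CFC.sqrt ((2 : ℂ)⁻¹ • (CFC.sqrt (star N * N) - C))
      = cfc (fun z : ℂ => ((Real.sqrt ((‖z‖ + z.re)/2) : ℝ) : ℂ) -
          Complex.I * ((Real.sqrt ((‖z‖ - z.re)/2) : ℝ) : ℂ)) N := by
    rw [hP, hQ, cfc_sub _ (fun z : ℂ => Complex.I * ((Real.sqrt ((‖z‖ - z.re)/2) : ℝ) : ℂ)) _ cont1.continuousOn (continuous_const.mul cont2).continuousOn,
      cfc_const_mul _ _ _ cont2.continuousOn]
  have him : ∀ z ∈ spectrum ℂ N, z.im ≤ 0 := im_spectrum_nonpos N D hnormal hDcfc hD0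
  rw [key]
  constructor
  · have comm : star (cfc (fun z : ℂ => ((Real.sqrt ((‖z‖ + z.re)/2) : ℝ) : ℂ) -
          Complex.I * ((Real.sqrt ((‖z‖ - z.re)/2) : ℝ) : ℂ)) N) *
        cfc (fun z : ℂ => ((Real.sqrt ((‖z‖ + z.re)/2) : ℝ) : ℂ) -
          Complex.I * ((Real.sqrt ((‖z‖ - z.re)/2) : ℝ) : ℂ)) N
        = cfc (fun z : ℂ => ((Real.sqrt ((‖z‖ + z.re)/2) : ℝ) : ℂ) -
          Complex.I * ((Real.sqrt ((‖z‖ - z.re)/2) : ℝ) : ℂ)) N *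
        star (cfc (fun z : ℂ => ((Real.sqrt ((‖z‖ + z.re)/2) : ℝ) : ℂ) -
          Complex.I * ((Real.sqrt ((‖z‖ - z.re)/2) : ℝ) : ℂ)) N) := by
      rw [← cfc_star, ← cfc_mul _ _ _ contg.star.continuousOn contg.continuousOn,
        ← cfc_mul _ _ _ contg.continuousOn contg.star.continuousOn]
      exact cfc_congr fun z _ => mul_comm _ _
    exact ⟨comm⟩
  · rw [sq, ← cfc_mul _ _ _ contg.continuousOn contg.continuousOn,
      cfc_congr (fun z hz => pointwise_sq z (him z hz)), cfc_id' ℂ (a := N) hnormal]
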